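/- Let ι be a nonempty finite index set, let w : ι → ℝ be nonnegative weights with ∑_{i∈ι} w_i = 1, let 0 < a ≤ b, and let x : ι → ℝ satisfy x_i ∈ [a, b] for every i. Write A = ∑_i w_i x_i for the weighted arithmetic mean and G = ∏_i x_i^{w_i} for the weighted geometric mean. Then (1/(2b)) ∑_i w_i (x_i − A)² ≤ A − G ≤ (1/(2a)) ∑_i w_i (x_i − A)². -/

import Mathlib

open Real Finset

/-- AM-GM helper: `t ^ q ≤ (1-q) + q * t` for `q ∈ [0,1]`, `t > 0`. -/
lemma rpow_le_one_sub_add {q t : ℝ} (hq0 : 0 ≤ q) (hq1 : q ≤ 1) (ht : 0 < t) :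
    t ^ q ≤ (1 - q) + q * t := by
  have h := Real.geom_mean_le_arith_mean2_weighted (by linarith : (0:ℝ) ≤ 1 - q) hq0
    zero_le_one ht.le (by ring)
  simpa [Real.one_rpow] using h

/-- `1 - t ^ (p-1) ≤ (1-p) * (t-1)` for `p ∈ [0,1]`, `t > 0`. -/
lemma bern_low {p t : ℝ} (hp0 : 0 ≤ p) (hp1 : p ≤ 1) (ht : 0 < t) :
    1 - t ^ (p - 1) ≤ (1 - p) * (t - 1) := by
  set q := 1 - p with hq
  have hq0 : 0 ≤ q := by linarith
  have hq1 : q ≤ 1 := by linarith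
  have hrw : t ^ (p - 1) = (t ^ q)⁻¹ := by
    rw [← Real.rpow_neg ht.le]; congr 1; ring
  have htq : 0 < t ^ q := Real.rpow_pos_of_pos ht q
  rw [hrw]
  rcases le_or_gt (1 - q * (t - 1)) 0 with h | h
  · have h2 : 0 < (t ^ q)⁻¹ := inv_pos.2 htq
    nlinarith
  · have hb := rpow_le_one_sub_add hq0 hq1 ht
    have key : (1 - q * (t - 1)) * t ^ q ≤ 1 := by
      have h4 := mul_le_mul_of_nonneg_left hb h.le
      nlinarith [sq_nonneg (q * (t - 1))]
    have h3 : (1 - q * (t - 1)) ≤ (t ^ q)⁻¹ := by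
      rw [inv_eq_one_div, le_div_iff₀ htq]; exact key
    linarith

/-- `(1-p) * (t-1) / t ≤ 1 - t ^ (p-1)` for `p ∈ [0,1]`, `t > 0`. -/
lemma bern_high {p t : ℝ} (hp0 : 0 ≤ p) (hp1 : p ≤ 1) (ht : 0 < t) :
    (1 - p) * (t - 1) / t ≤ 1 - t ^ (p - 1) := by
  set q := 1 - p with hq
  have hq0 : 0 ≤ q := by linarith
  have hq1 : q ≤ 1 := by linarith
  have htinv : 0 < t⁻¹ := inv_pos.2 ht
  have hb := rpow_le_one_sub_add hq0 hq1 htinv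
  have hrw : t ^ (p - 1) = t⁻¹ ^ q := by
    rw [Real.inv_rpow ht.le, ← Real.rpow_neg ht.le]; congr 1; ring
  have hdiv : q * (t - 1) / t = q - q * t⁻¹ := by field_simp
  rw [hrw]; rw [hdiv]; linarith

section OneVar

variable {p : ℝ} (hp0 : 0 ≤ p) (hp1 : p ≤ 1)

/-- `f₁` is antitone on `(0, ∞)`. -/
lemma f1_anti (hp0 : 0 ≤ p) (hp1 : p ≤ 1) :
    AntitoneOn (fun t : ℝ => p * t + (1 - p) - t ^ p - p * (1 - p) * (t - 1) ^ 2 / 2)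
      (Set.Ioi 0) := by
  have hint : interior (Set.Ioi (0:ℝ)) = Set.Ioi 0 := interior_Ioi
  apply antitoneOn_of_hasDerivWithinAt_nonpos (convex_Ioi 0)
    (f' := fun t => p - p * t ^ (p - 1) - p * (1 - p) * (t - 1))
  · -- continuity
    apply ContinuousOn.sub
    apply ContinuousOn.sub
    · fun_prop
    · intro t ht
      exact (Real.continuousAt_rpow_const t p (Or.inl (ne_of_gt ht))).continuousWithinAt
    · fun_prop
  · rw [hint]
    intro t ht
    have ht' : (0:ℝ) < t := ht
    have h1 : HasDerivAt (fun t : ℝ => t ^ p) (p * t ^ (p - 1)) t :=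
      Real.hasDerivAt_rpow_const (Or.inl (ne_of_gt ht'))
    have h2 : HasDerivAt (fun t : ℝ => p * t + (1 - p) - t ^ p
        - p * (1 - p) * (t - 1) ^ 2 / 2)
        (p - p * t ^ (p - 1) - p * (1 - p) * (t - 1)) t := by
      have ha : HasDerivAt (fun t : ℝ => p * t + (1 - p)) p t := by
        simpa using ((hasDerivAt_id t).const_mul p).add_const (1 - p)
      have hb : HasDerivAt (fun t : ℝ => p * (1 - p) * (t - 1) ^ 2 / 2)
          (p * (1 - p) * (t - 1)) t := by
        have hc : HasDerivAt (fun t : ℝ => (t - 1) ^ 2) (2 * (t - 1)) t := by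
          simpa using ((hasDerivAt_id t).sub_const 1).fun_pow 2
        have := ((hc.const_mul (p * (1 - p))).div_const 2)
        exact this.congr_deriv (by ring)
      convert (ha.fun_sub h1).fun_sub hb using 1
    exact h2.hasDerivWithinAt
  · rw [hint]
    intro t ht
    have ht' : (0:ℝ) < t := ht
    have hb := bern_low hp0 hp1 ht'
    nlinarith

/-- `f₂` is monotone on `(0, ∞)`. -/
lemma f2_mono (hp0 : 0 ≤ p) (hp1 : p ≤ 1) :
    MonotoneOn (fun t : ℝ => p * t + (1 - p) - t ^ p - p * (1 - p) * ((t - 1) ^ 2 / (2 * t)))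
      (Set.Ioi 0) := by
  have hint : interior (Set.Ioi (0:ℝ)) = Set.Ioi 0 := interior_Ioi
  apply monotoneOn_of_hasDerivWithinAt_nonneg (convex_Ioi 0)
    (f' := fun t => p - p * t ^ (p - 1)
      - p * (1 - p) * ((2 * (t - 1) * (2 * t) - (t - 1) ^ 2 * 2) / (2 * t) ^ 2))
  · apply ContinuousOn.sub
    apply ContinuousOn.sub
    · fun_prop
    · intro t ht
      exact (Real.continuousAt_rpow_const t p (Or.inl (ne_of_gt ht))).continuousWithinAt
    · apply ContinuousOn.mul continuousOn_const
      apply ContinuousOn.div (by fun_prop) (by fun_prop)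
      intro t ht
      have : (0:ℝ) < t := ht
      positivity
  · rw [hint]
    intro t ht
    have ht' : (0:ℝ) < t := ht
    have h1 : HasDerivAt (fun t : ℝ => t ^ p) (p * t ^ (p - 1)) t :=
      Real.hasDerivAt_rpow_const (Or.inl (ne_of_gt ht'))
    have ha : HasDerivAt (fun t : ℝ => p * t + (1 - p)) p t := by
      simpa using ((hasDerivAt_id t).const_mul p).add_const (1 - p)
    have hc : HasDerivAt (fun t : ℝ => (t - 1) ^ 2) (2 * (t - 1)) t := by
      simpa using ((hasDerivAt_id t).sub_const 1).fun_pow 2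
    have hd : HasDerivAt (fun t : ℝ => 2 * t) 2 t := by
      simpa using (hasDerivAt_id t).const_mul 2
    have he : HasDerivAt (fun t : ℝ => (t - 1) ^ 2 / (2 * t))
        ((2 * (t - 1) * (2 * t) - (t - 1) ^ 2 * 2) / (2 * t) ^ 2) t :=
      hc.div hd (by positivity)
    exact (((ha.sub h1).sub (he.const_mul (p * (1 - p)))).congr_deriv (by ring)).hasDerivWithinAt
  · rw [hint]
    intro t ht
    have ht' : (0:ℝ) < t := ht
    have hb := bern_high hp0 hp1 ht'
    have hkey : (2 * (t - 1) * (2 * t) - (t - 1) ^ 2 * 2) / (2 * t) ^ 2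
        = (t - 1) / t - (t - 1) ^ 2 / (2 * t ^ 2) := by
      field_simp
    rw [hkey]
    have h5 : 0 ≤ (t - 1) ^ 2 / (2 * t ^ 2) := by positivity
    have h7 : 0 ≤ p * (1 - p) * ((t - 1) ^ 2 / (2 * t ^ 2)) :=
      mul_nonneg (mul_nonneg hp0 (by linarith)) h5
    have h6 : p * ((1 - p) * (t - 1) / t) ≤ p * (1 - t ^ (p - 1)) :=
      mul_le_mul_of_nonneg_left hb hp0
    have h8 : p * (1 - p) * ((t - 1) / t - (t - 1) ^ 2 / (2 * t ^ 2))
        = p * ((1 - p) * (t - 1) / t) - p * (1 - p) * ((t - 1) ^ 2 / (2 * t ^ 2)) := by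
      ring
    rw [h8]
    nlinarith [h6, h7]

end OneVar

section Corollaries

variable {p t : ℝ}

lemma f1_at_one : p * 1 + (1 - p) - (1:ℝ) ^ p - p * (1 - p) * ((1:ℝ) - 1) ^ 2 / 2 = 0 := by
  rw [Real.one_rpow]; ring

/-- L1: for `0 < t ≤ 1`, `p(1-p)(1-t)²/2 ≤ pt + (1-p) - t^p`. -/
lemma one_var_low_le1 (hp0 : 0 ≤ p) (hp1 : p ≤ 1) (ht0 : 0 < t) (ht1 : t ≤ 1) :
    p * (1 - p) * (1 - t) ^ 2 / 2 ≤ p * t + (1 - p) - t ^ p := by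
  have h := f1_anti hp0 hp1 (Set.mem_Ioi.2 ht0) (Set.mem_Ioi.2 one_pos) ht1
  simp only at h
  rw [Real.one_rpow] at h
  nlinarith [h]

/-- U1: for `1 ≤ t`, `pt + (1-p) - t^p ≤ p(1-p)(t-1)²/2`. -/
lemma one_var_up_ge1 (hp0 : 0 ≤ p) (hp1 : p ≤ 1) (ht1 : 1 ≤ t) :
    p * t + (1 - p) - t ^ p ≤ p * (1 - p) * (t - 1) ^ 2 / 2 := by
  have h := f1_anti hp0 hp1 (Set.mem_Ioi.2 one_pos) (Set.mem_Ioi.2 (by linarith : (0:ℝ) < t)) ht1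
  simp only at h
  rw [Real.one_rpow] at h
  nlinarith [h]

/-- L2: for `1 ≤ t`, `p(1-p)(t-1)²/(2t) ≤ pt + (1-p) - t^p`. -/
lemma one_var_low_ge1 (hp0 : 0 ≤ p) (hp1 : p ≤ 1) (ht1 : 1 ≤ t) :
    p * (1 - p) * ((t - 1) ^ 2 / (2 * t)) ≤ p * t + (1 - p) - t ^ p := by
  have h := f2_mono hp0 hp1 (Set.mem_Ioi.2 one_pos) (Set.mem_Ioi.2 (by linarith : (0:ℝ) < t)) ht1
  simp only at h
  rw [Real.one_rpow] at h
  nlinarith [h]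

/-- U2: for `0 < t ≤ 1`, `pt + (1-p) - t^p ≤ p(1-p)(t-1)²/(2t)`. -/
lemma one_var_up_le1 (hp0 : 0 ≤ p) (hp1 : p ≤ 1) (ht0 : 0 < t) (ht1 : t ≤ 1) :
    p * t + (1 - p) - t ^ p ≤ p * (1 - p) * ((t - 1) ^ 2 / (2 * t)) := by
  have h := f2_mono hp0 hp1 (Set.mem_Ioi.2 ht0) (Set.mem_Ioi.2 one_pos) ht1
  simp only at h
  rw [Real.one_rpow] at h
  nlinarith [h]

end Corollaries

/-- Two-point Cartwright–Field inequality. -/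
lemma two_point {a b p q x y : ℝ} (ha : 0 < a) (hab : a ≤ b)
    (hp : 0 ≤ p) (hq : 0 ≤ q) (hpq : p + q = 1)
    (hx : x ∈ Set.Icc a b) (hy : y ∈ Set.Icc a b) :
    p * q * (x - y) ^ 2 / (2 * b) ≤ p * x + q * y - x ^ p * y ^ q ∧
      p * x + q * y - x ^ p * y ^ q ≤ p * q * (x - y) ^ 2 / (2 * a) := by
  obtain ⟨hax, hxb⟩ := hx
  obtain ⟨hay, hyb⟩ := hy
  have hx0 : 0 < x := lt_of_lt_of_le ha hax
  have hy0 : 0 < y := lt_of_lt_of_le ha hay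
  have hb : 0 < b := lt_of_lt_of_le ha hab
  have hq' : q = 1 - p := by linarith
  have hp1 : p ≤ 1 := by linarith
  set t := x / y with htdef
  have ht0 : 0 < t := div_pos hx0 hy0
  have hgm : x ^ p * y ^ q = y * t ^ p := by
    rw [htdef, Real.div_rpow hx0.le hy0.le, hq', Real.rpow_sub hy0, Real.rpow_one]
    field_simp
  have hmain : p * x + q * y - x ^ p * y ^ q = y * (p * t + (1 - p) - t ^ p) := by
    rw [hgm, htdef, hq']; field_simp
  rcases le_total y x with hyx | hxy
  · -- t ≥ 1
    have ht1 : 1 ≤ t := (one_le_div hy0).2 hyx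
    constructor
    · have hL := one_var_low_ge1 hp hp1 ht1
      have hL' := mul_le_mul_of_nonneg_left hL hy0.le
      have hid : y * (p * (1 - p) * ((t - 1) ^ 2 / (2 * t))) = p * q * (x - y) ^ 2 / (2 * x) := by
        rw [htdef, hq']; field_simp
      have hmono : p * q * (x - y) ^ 2 / (2 * b) ≤ p * q * (x - y) ^ 2 / (2 * x) := by
        gcongr
      rw [hmain]; calc p * q * (x - y) ^ 2 / (2 * b) ≤ p * q * (x - y) ^ 2 / (2 * x) := hmono
        _ = y * (p * (1 - p) * ((t - 1) ^ 2 / (2 * t))) := hid.symm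
        _ ≤ y * (p * t + (1 - p) - t ^ p) := hL'
    · have hU := one_var_up_ge1 hp hp1 ht1
      have hU' := mul_le_mul_of_nonneg_left hU hy0.le
      have hid : y * (p * (1 - p) * (t - 1) ^ 2 / 2) = p * q * (x - y) ^ 2 / (2 * y) := by
        rw [htdef, hq']; field_simp
      have hmono : p * q * (x - y) ^ 2 / (2 * y) ≤ p * q * (x - y) ^ 2 / (2 * a) := by
        gcongr
      rw [hmain]; calc y * (p * t + (1 - p) - t ^ p) ≤ y * (p * (1 - p) * (t - 1) ^ 2 / 2) := hU'
        _ = p * q * (x - y) ^ 2 / (2 * y) := hid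
        _ ≤ p * q * (x - y) ^ 2 / (2 * a) := hmono
  · -- t ≤ 1
    have ht1 : t ≤ 1 := (div_le_one hy0).2 hxy
    constructor
    · have hL := one_var_low_le1 hp hp1 ht0 ht1
      have hL' := mul_le_mul_of_nonneg_left hL hy0.le
      have hid : y * (p * (1 - p) * (1 - t) ^ 2 / 2) = p * q * (x - y) ^ 2 / (2 * y) := by
        rw [htdef, hq']; field_simp; ring
      have hmono : p * q * (x - y) ^ 2 / (2 * b) ≤ p * q * (x - y) ^ 2 / (2 * y) := by
        gcongr
      rw [hmain]; calc p * q * (x - y) ^ 2 / (2 * b) ≤ p * q * (x - y) ^ 2 / (2 * y) := hmono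
        _ = y * (p * (1 - p) * (1 - t) ^ 2 / 2) := hid.symm
        _ ≤ y * (p * t + (1 - p) - t ^ p) := hL'
    · have hU := one_var_up_le1 hp hp1 ht0 ht1
      have hU' := mul_le_mul_of_nonneg_left hU hy0.le
      have hid : y * (p * (1 - p) * ((t - 1) ^ 2 / (2 * t))) = p * q * (x - y) ^ 2 / (2 * x) := by
        rw [htdef, hq']; field_simp
      have hmono : p * q * (x - y) ^ 2 / (2 * x) ≤ p * q * (x - y) ^ 2 / (2 * a) := by
        gcongr
      rw [hmain]; calc y * (p * t + (1 - p) - t ^ p)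
            ≤ y * (p * (1 - p) * ((t - 1) ^ 2 / (2 * t))) := hU'
        _ = p * q * (x - y) ^ 2 / (2 * x) := hid
        _ ≤ p * q * (x - y) ^ 2 / (2 * a) := hmono

/-- Product of rpow of a constant. -/
lemma prod_rpow_const {ι : Type*} {s : Finset ι} {c : ℝ} (hc : 0 < c) (v : ι → ℝ) :
    ∏ i ∈ s, c ^ v i = c ^ (∑ i ∈ s, v i) := by
  calc ∏ i ∈ s, c ^ v i = ∏ i ∈ s, Real.exp (Real.log c * v i) := by
        refine Finset.prod_congr rfl fun i _ => ?_
        rw [Real.rpow_def_of_pos hc]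
      _ = Real.exp (∑ i ∈ s, Real.log c * v i) := (Real.exp_sum _ _).symm
      _ = c ^ (∑ i ∈ s, v i) := by
        rw [← Finset.mul_sum, Real.rpow_def_of_pos hc]

lemma cf_lower {ι : Type*} {a b : ℝ} (ha : 0 < a) (hab : a ≤ b) :
    ∀ s : Finset ι, ∀ w x : ι → ℝ, (∀ i ∈ s, 0 ≤ w i) → (∑ i ∈ s, w i) = 1 →
      (∀ i ∈ s, x i ∈ Set.Icc a b) →
      (1 / (2 * b)) * ∑ i ∈ s, w i * (x i - ∑ j ∈ s, w j * x j) ^ 2 ≤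
        (∑ i ∈ s, w i * x i) - ∏ i ∈ s, x i ^ w i := by
  classical
  intro s
  induction s using Finset.strongInduction with
  | _ s ih =>
    intro w x hw hsum hx
    have hb : 0 < b := lt_of_lt_of_le ha hab
    rcases s.eq_empty_or_nonempty with rfl | hne
    · simp at hsum
    obtain ⟨j, hj, hjmax⟩ := Finset.exists_max_image s x hne
    have hxj := hx j hj
    have hxj0 : 0 < x j := lt_of_lt_of_le ha hxj.1
    set s' := s.erase j with hs'
    set p := w j with hpdef
    set q := ∑ i ∈ s', w i with hqdef
    have hpq : p + q = 1 := by rw [hpdef, hqdef, Finset.add_sum_erase _ _ hj, hsum]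
    have hp0 : 0 ≤ p := hw j hj
    have hq0 : 0 ≤ q := Finset.sum_nonneg fun i hi => hw i (Finset.mem_of_mem_erase hi)
    rcases eq_or_lt_of_le hq0 with hq0' | hqpos
    · -- degenerate case: all the weight is on j
      have hw0 : ∀ i ∈ s', w i = 0 :=
        (Finset.sum_eq_zero_iff_of_nonneg
          (fun i hi => hw i (Finset.mem_of_mem_erase hi))).1 hq0'.symm
      have hp1 : p = 1 := by linarith
      have hA : ∑ i ∈ s, w i * x i = x j := by
        rw [← Finset.add_sum_erase _ _ hj, Finset.sum_eq_zero
          (fun i hi => by rw [hw0 i hi, zero_mul]), ← hpdef, hp1]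
        ring
      have hG : ∏ i ∈ s, x i ^ w i = x j := by
        rw [← Finset.mul_prod_erase _ _ hj, Finset.prod_eq_one
          (fun i hi => by rw [hw0 i hi, Real.rpow_zero]), ← hpdef, hp1, Real.rpow_one]
        ring
      have hS : ∑ i ∈ s, w i * (x i - ∑ j' ∈ s, w j' * x j') ^ 2 = 0 := by
        rw [hA]
        refine Finset.sum_eq_zero fun i hi => ?_
        by_cases hij : i = j
        · rw [hij]; ring
        · rw [hw0 i (Finset.mem_erase.2 ⟨hij, hi⟩), zero_mul]
      rw [hS, hA, hG]
      simp
    · -- main case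
      have hq1 : q ≤ 1 := by linarith
      have hp1 : p ≤ 1 := by linarith
      set v : ι → ℝ := fun i => w i / q with hvdef
      have hv0 : ∀ i ∈ s', 0 ≤ v i := fun i hi =>
        div_nonneg (hw i (Finset.mem_of_mem_erase hi)) hq0
      have hvsum : ∑ i ∈ s', v i = 1 := by
        rw [hvdef, ← Finset.sum_div, ← hqdef, div_self (ne_of_gt hqpos)]
      have hwv : ∀ i ∈ s', w i = q * v i := fun i hi => by
        rw [hvdef]; field_simp
      set A₂ := ∑ i ∈ s', v i * x i with hA₂def
      set H := ∏ i ∈ s', x i ^ v i with hHdef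
      set S₂ := ∑ i ∈ s', v i * (x i - A₂) ^ 2 with hS₂def
      have IH := ih s' (Finset.erase_ssubset hj) v x hv0 hvsum
        (fun i hi => hx i (Finset.mem_of_mem_erase hi))
      rw [← hA₂def, ← hHdef, ← hS₂def] at IH
      have hS₂0 : 0 ≤ S₂ := Finset.sum_nonneg fun i hi =>
        mul_nonneg (hv0 i hi) (sq_nonneg _)
      have hHA₂ : H ≤ A₂ := by nlinarith [IH, mul_nonneg (by positivity : (0:ℝ) ≤ 1 / (2*b)) hS₂0]
      have hA₂a : a ≤ A₂ := by
        have h1 : ∑ i ∈ s', v i * a ≤ ∑ i ∈ s', v i * x i := Finset.sum_le_sum fun i hi =>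
          mul_le_mul_of_nonneg_left (hx i (Finset.mem_of_mem_erase hi)).1 (hv0 i hi)
        rw [← Finset.sum_mul, hvsum, one_mul] at h1
        exact h1
      have hA₂b : A₂ ≤ b := by
        have h1 : ∑ i ∈ s', v i * x i ≤ ∑ i ∈ s', v i * b := Finset.sum_le_sum fun i hi =>
          mul_le_mul_of_nonneg_left (hx i (Finset.mem_of_mem_erase hi)).2 (hv0 i hi)
        rw [← Finset.sum_mul, hvsum, one_mul] at h1
        exact h1
      have hA₂0 : 0 < A₂ := lt_of_lt_of_le ha hA₂a
      have hA₂xj : A₂ ≤ x j := by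
        have h1 : ∑ i ∈ s', v i * x i ≤ ∑ i ∈ s', v i * x j := Finset.sum_le_sum fun i hi =>
          mul_le_mul_of_nonneg_left (hjmax i (Finset.mem_of_mem_erase hi)) (hv0 i hi)
        rw [← Finset.sum_mul, hvsum, one_mul] at h1
        exact h1
      have hH0 : 0 < H := Finset.prod_pos fun i hi =>
        Real.rpow_pos_of_pos (lt_of_lt_of_le ha (hx i (Finset.mem_of_mem_erase hi)).1) _
      -- arithmetic mean decomposition
      have hA : ∑ i ∈ s, w i * x i = p * x j + q * A₂ := by
        rw [← Finset.add_sum_erase _ (fun i => w i * x i) hj, ← hpdef, hA₂def, Finset.mul_sum]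
        congr 1
        refine Finset.sum_congr rfl fun i hi => ?_
        rw [hwv i hi]; ring
      -- geometric mean decomposition
      have hG : ∏ i ∈ s, x i ^ w i = x j ^ p * H ^ q := by
        rw [← Finset.mul_prod_erase _ (fun i => x i ^ w i) hj, ← hpdef, hHdef,
          ← Real.finset_prod_rpow s' _ (fun i hi =>
            (Real.rpow_pos_of_pos (lt_of_lt_of_le ha (hx i (Finset.mem_of_mem_erase hi)).1) _).le) q]
        congr 1
        refine Finset.prod_congr rfl fun i hi => ?_
        rw [hwv i hi, mul_comm q (v i), Real.rpow_mul
          (lt_of_lt_of_le ha (hx i (Finset.mem_of_mem_erase hi)).1).le]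
      -- variance decomposition
      have hsum2 : ∑ i ∈ s', v i * (x i - (p * x j + q * A₂)) ^ 2
          = S₂ + (A₂ - (p * x j + q * A₂)) ^ 2 := by
        set A := p * x j + q * A₂ with hAdef
        have key : ∀ i ∈ s', v i * (x i - A) ^ 2
            = v i * (x i - A₂) ^ 2 + (2 * (A₂ - A)) * (v i * x i)
              - ((A₂ - A) * (A + A₂)) * v i := fun i _ => by ring
        rw [Finset.sum_congr rfl key]
        rw [Finset.sum_sub_distrib, Finset.sum_add_distrib, ← Finset.mul_sum, ← Finset.mul_sum,
          ← hA₂def, ← hS₂def, hvsum]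
        ring
      have hS : ∑ i ∈ s, w i * (x i - (p * x j + q * A₂)) ^ 2
          = p * q * (x j - A₂) ^ 2 + q * S₂ := by
        rw [← Finset.add_sum_erase _ (fun i => w i * (x i - (p * x j + q * A₂)) ^ 2) hj, ← hpdef]
        have h2 : ∑ i ∈ s', w i * (x i - (p * x j + q * A₂)) ^ 2
            = q * ∑ i ∈ s', v i * (x i - (p * x j + q * A₂)) ^ 2 := by
          rw [Finset.mul_sum s' (fun i => v i * (x i - (p * x j + q * A₂)) ^ 2) q]
          refine Finset.sum_congr rfl fun i hi => ?_
          rw [hwv i hi]; ring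
        rw [h2, hsum2]
        have hq' : q = 1 - p := by linarith
        rw [hq']; ring
      -- two-point inequality
      have htp := (two_point ha hab hp0 hq0 hpq hxj ⟨hA₂a, hA₂b⟩).1
      -- second bracket
      have hgm2 : A₂ ^ p * H ^ q ≤ p * A₂ + q * H :=
        Real.geom_mean_le_arith_mean2_weighted hp0 hq0 hA₂0.le hH0.le hpq
      have he1 : A₂ ^ p * A₂ ^ q = A₂ := by
        rw [← Real.rpow_add hA₂0, hpq, Real.rpow_one]
      have hbr2 : q * (A₂ - H) ≤ x j ^ p * A₂ ^ q - x j ^ p * H ^ q := by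
        have h1 : A₂ ^ p ≤ x j ^ p := Real.rpow_le_rpow hA₂0.le hA₂xj hp0
        have h2 : H ^ q ≤ A₂ ^ q := Real.rpow_le_rpow hH0.le hHA₂ hq0
        have h3 : A₂ ^ p * (A₂ ^ q - H ^ q) ≤ x j ^ p * (A₂ ^ q - H ^ q) :=
          mul_le_mul_of_nonneg_right h1 (by linarith)
        nlinarith [h3, hgm2, he1]
      -- assemble
      rw [hA, hG, hS]
      have h3 : q * ((1 / (2 * b)) * S₂) ≤ q * (A₂ - H) :=
        mul_le_mul_of_nonneg_left IH hq0
      have hd1 : (1 / (2 * b)) * (p * q * (x j - A₂) ^ 2 + q * S₂)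
          = p * q * (x j - A₂) ^ 2 / (2 * b) + q * ((1 / (2 * b)) * S₂) := by ring
      rw [hd1]
      linarith [htp, hbr2, h3]

lemma cf_upper {ι : Type*} {a b : ℝ} (ha : 0 < a) (hab : a ≤ b) :
    ∀ s : Finset ι, ∀ w x : ι → ℝ, (∀ i ∈ s, 0 ≤ w i) → (∑ i ∈ s, w i) = 1 →
      (∀ i ∈ s, x i ∈ Set.Icc a b) →
      (∑ i ∈ s, w i * x i) - ∏ i ∈ s, x i ^ w i ≤
        (1 / (2 * a)) * ∑ i ∈ s, w i * (x i - ∑ j ∈ s, w j * x j) ^ 2 := by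
  classical
  intro s
  induction s using Finset.strongInduction with
  | _ s ih =>
    intro w x hw hsum hx
    have hb : 0 < b := lt_of_lt_of_le ha hab
    rcases s.eq_empty_or_nonempty with rfl | hne
    · simp at hsum
    obtain ⟨j, hj, hjmin⟩ := Finset.exists_min_image s x hne
    have hxj := hx j hj
    have hxj0 : 0 < x j := lt_of_lt_of_le ha hxj.1
    set s' := s.erase j with hs'
    set p := w j with hpdef
    set q := ∑ i ∈ s', w i with hqdef
    have hpq : p + q = 1 := by rw [hpdef, hqdef, Finset.add_sum_erase _ _ hj, hsum]
    have hp0 : 0 ≤ p := hw j hj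
    have hq0 : 0 ≤ q := Finset.sum_nonneg fun i hi => hw i (Finset.mem_of_mem_erase hi)
    rcases eq_or_lt_of_le hq0 with hq0' | hqpos
    · -- degenerate case: all the weight is on j
      have hw0 : ∀ i ∈ s', w i = 0 :=
        (Finset.sum_eq_zero_iff_of_nonneg
          (fun i hi => hw i (Finset.mem_of_mem_erase hi))).1 hq0'.symm
      have hp1 : p = 1 := by linarith
      have hA : ∑ i ∈ s, w i * x i = x j := by
        rw [← Finset.add_sum_erase _ _ hj, Finset.sum_eq_zero
          (fun i hi => by rw [hw0 i hi, zero_mul]), ← hpdef, hp1]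
        ring
      have hG : ∏ i ∈ s, x i ^ w i = x j := by
        rw [← Finset.mul_prod_erase _ _ hj, Finset.prod_eq_one
          (fun i hi => by rw [hw0 i hi, Real.rpow_zero]), ← hpdef, hp1, Real.rpow_one]
        ring
      have hS : ∑ i ∈ s, w i * (x i - ∑ j' ∈ s, w j' * x j') ^ 2 = 0 := by
        rw [hA]
        refine Finset.sum_eq_zero fun i hi => ?_
        by_cases hij : i = j
        · rw [hij]; ring
        · rw [hw0 i (Finset.mem_erase.2 ⟨hij, hi⟩), zero_mul]
      rw [hS, hA, hG]
      simp
    · -- main case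
      have hq1 : q ≤ 1 := by linarith
      have hp1 : p ≤ 1 := by linarith
      set v : ι → ℝ := fun i => w i / q with hvdef
      have hv0 : ∀ i ∈ s', 0 ≤ v i := fun i hi =>
        div_nonneg (hw i (Finset.mem_of_mem_erase hi)) hq0
      have hvsum : ∑ i ∈ s', v i = 1 := by
        rw [hvdef, ← Finset.sum_div, ← hqdef, div_self (ne_of_gt hqpos)]
      have hwv : ∀ i ∈ s', w i = q * v i := fun i hi => by
        rw [hvdef]; field_simp
      set A₂ := ∑ i ∈ s', v i * x i with hA₂def
      set H := ∏ i ∈ s', x i ^ v i with hHdef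
      set S₂ := ∑ i ∈ s', v i * (x i - A₂) ^ 2 with hS₂def
      have IH := ih s' (Finset.erase_ssubset hj) v x hv0 hvsum
        (fun i hi => hx i (Finset.mem_of_mem_erase hi))
      rw [← hA₂def, ← hHdef, ← hS₂def] at IH
      have hS₂0 : 0 ≤ S₂ := Finset.sum_nonneg fun i hi =>
        mul_nonneg (hv0 i hi) (sq_nonneg _)
      have hHA₂ : H ≤ A₂ := by
        have := Real.geom_mean_le_arith_mean_weighted s' v x hv0 hvsum
          (fun i hi => (lt_of_lt_of_le ha (hx i (Finset.mem_of_mem_erase hi)).1).le)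
        rw [← hHdef, ← hA₂def] at this
        exact this
      have hA₂a : a ≤ A₂ := by
        have h1 : ∑ i ∈ s', v i * a ≤ ∑ i ∈ s', v i * x i := Finset.sum_le_sum fun i hi =>
          mul_le_mul_of_nonneg_left (hx i (Finset.mem_of_mem_erase hi)).1 (hv0 i hi)
        rw [← Finset.sum_mul, hvsum, one_mul] at h1
        exact h1
      have hA₂b : A₂ ≤ b := by
        have h1 : ∑ i ∈ s', v i * x i ≤ ∑ i ∈ s', v i * b := Finset.sum_le_sum fun i hi =>
          mul_le_mul_of_nonneg_left (hx i (Finset.mem_of_mem_erase hi)).2 (hv0 i hi)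
        rw [← Finset.sum_mul, hvsum, one_mul] at h1
        exact h1
      have hA₂0 : 0 < A₂ := lt_of_lt_of_le ha hA₂a
      have hH0 : 0 < H := Finset.prod_pos fun i hi =>
        Real.rpow_pos_of_pos (lt_of_lt_of_le ha (hx i (Finset.mem_of_mem_erase hi)).1) _
      have hxjH : x j ≤ H := by
        have h1 : ∏ i ∈ s', x j ^ v i ≤ ∏ i ∈ s', x i ^ v i := by
          refine Finset.prod_le_prod (fun i hi => (Real.rpow_pos_of_pos hxj0 _).le)
            (fun i hi => Real.rpow_le_rpow hxj0.le
              (hjmin i (Finset.mem_of_mem_erase hi)) (hv0 i hi))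
        rw [prod_rpow_const hxj0 v, hvsum, Real.rpow_one] at h1
        exact h1
      -- arithmetic mean decomposition
      have hA : ∑ i ∈ s, w i * x i = p * x j + q * A₂ := by
        rw [← Finset.add_sum_erase _ (fun i => w i * x i) hj, ← hpdef, hA₂def, Finset.mul_sum]
        congr 1
        refine Finset.sum_congr rfl fun i hi => ?_
        rw [hwv i hi]; ring
      -- geometric mean decomposition
      have hG : ∏ i ∈ s, x i ^ w i = x j ^ p * H ^ q := by
        rw [← Finset.mul_prod_erase _ (fun i => x i ^ w i) hj, ← hpdef, hHdef,
          ← Real.finset_prod_rpow s' _ (fun i hi =>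
            (Real.rpow_pos_of_pos (lt_of_lt_of_le ha (hx i (Finset.mem_of_mem_erase hi)).1) _).le) q]
        congr 1
        refine Finset.prod_congr rfl fun i hi => ?_
        rw [hwv i hi, mul_comm q (v i), Real.rpow_mul
          (lt_of_lt_of_le ha (hx i (Finset.mem_of_mem_erase hi)).1).le]
      -- variance decomposition
      have hsum2 : ∑ i ∈ s', v i * (x i - (p * x j + q * A₂)) ^ 2
          = S₂ + (A₂ - (p * x j + q * A₂)) ^ 2 := by
        set A := p * x j + q * A₂ with hAdef
        have key : ∀ i ∈ s', v i * (x i - A) ^ 2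
            = v i * (x i - A₂) ^ 2 + (2 * (A₂ - A)) * (v i * x i)
              - ((A₂ - A) * (A + A₂)) * v i := fun i _ => by ring
        rw [Finset.sum_congr rfl key]
        rw [Finset.sum_sub_distrib, Finset.sum_add_distrib, ← Finset.mul_sum, ← Finset.mul_sum,
          ← hA₂def, ← hS₂def, hvsum]
        ring
      have hS : ∑ i ∈ s, w i * (x i - (p * x j + q * A₂)) ^ 2
          = p * q * (x j - A₂) ^ 2 + q * S₂ := by
        rw [← Finset.add_sum_erase _ (fun i => w i * (x i - (p * x j + q * A₂)) ^ 2) hj, ← hpdef]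
        have h2 : ∑ i ∈ s', w i * (x i - (p * x j + q * A₂)) ^ 2
            = q * ∑ i ∈ s', v i * (x i - (p * x j + q * A₂)) ^ 2 := by
          rw [Finset.mul_sum s' (fun i => v i * (x i - (p * x j + q * A₂)) ^ 2) q]
          refine Finset.sum_congr rfl fun i hi => ?_
          rw [hwv i hi]; ring
        rw [h2, hsum2]
        have hq' : q = 1 - p := by linarith
        rw [hq']; ring
      -- two-point inequality
      have htp := (two_point ha hab hp0 hq0 hpq hxj ⟨hA₂a, hA₂b⟩).2
      -- second bracket
      have hgm2 : H ^ p * A₂ ^ q ≤ p * H + q * A₂ :=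
        Real.geom_mean_le_arith_mean2_weighted hp0 hq0 hH0.le hA₂0.le hpq
      have he1 : H ^ p * H ^ q = H := by
        rw [← Real.rpow_add hH0, hpq, Real.rpow_one]
      have hbr2 : x j ^ p * A₂ ^ q - x j ^ p * H ^ q ≤ q * (A₂ - H) := by
        have h1 : x j ^ p ≤ H ^ p := Real.rpow_le_rpow hxj0.le hxjH hp0
        have h2 : H ^ q ≤ A₂ ^ q := Real.rpow_le_rpow hH0.le hHA₂ hq0
        have h3 : x j ^ p * (A₂ ^ q - H ^ q) ≤ H ^ p * (A₂ ^ q - H ^ q) :=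
          mul_le_mul_of_nonneg_right h1 (by linarith)
        nlinarith [h3, hgm2, he1]
      -- assemble
      rw [hA, hG, hS]
      have h3 : q * (A₂ - H) ≤ q * ((1 / (2 * a)) * S₂) :=
        mul_le_mul_of_nonneg_left IH hq0
      have hd1 : (1 / (2 * a)) * (p * q * (x j - A₂) ^ 2 + q * S₂)
          = p * q * (x j - A₂) ^ 2 / (2 * a) + q * ((1 / (2 * a)) * S₂) := by ring
      rw [hd1]
      linarith [htp, hbr2, h3]

/-- **Cartwright–Field refinement of the weighted AM–GM inequality.**
For nonnegative weights `w` summing to `1` and points `x i ∈ [a, b]` with `0 < a ≤ b`,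
writing `A = ∑ i, w i * x i` and `G = ∏ i, x i ^ w i` (real powers), we have
`(1/(2b)) ∑ i, w i (x i − A)² ≤ A − G ≤ (1/(2a)) ∑ i, w i (x i − A)²`. -/
theorem cartwright_field {ι : Type*} [Fintype ι] [Nonempty ι]
    (w x : ι → ℝ) (hw : ∀ i, 0 ≤ w i) (hsum : ∑ i, w i = 1)
    (a b : ℝ) (ha : 0 < a) (hab : a ≤ b)
    (hx : ∀ i, x i ∈ Set.Icc a b) :
    (1 / (2 * b)) * ∑ i, w i * (x i - ∑ j, w j * x j) ^ 2 ≤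
        (∑ i, w i * x i) - ∏ i, x i ^ w i ∧
      (∑ i, w i * x i) - ∏ i, x i ^ w i ≤
        (1 / (2 * a)) * ∑ i, w i * (x i - ∑ j, w j * x j) ^ 2 := by
  exact ⟨cf_lower ha hab Finset.univ w x (fun i _ => hw i) hsum (fun i _ => hx i),
    cf_upper ha hab Finset.univ w x (fun i _ => hw i) hsum (fun i _ => hx i)⟩
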